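/- Let P be a patch contained in some tiling of Ω, let t₁, t₂ ∈ P with x(t₁) = 0, let r > 0 be such that supp(P) ⊆ B_r(0), and set Y = {T(B_r(0)) : T ∈ U(P, t₁)}. Then Y is a finite set of patches, and V(P, t₁, t₂) is the disjoint union of the sets V(P', t₁, t₂) for P' ∈ Y. -/

import Mathlib

open Metric Set Pointwise

noncomputable section

/-- Points of `ℝ^d`. -/
abbrev Pt (d : ℕ) := EuclideanSpace ℝ (Fin d)

/-- A (possibly labelled) tile in `ℝ^d`: a subset of `ℝ^d` together with a label. -/
structure Tile (d : ℕ) where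
  carrier : Set (Pt d)
  label : ℕ

instance {d : ℕ} : Inhabited (Tile d) := ⟨⟨∅, 0⟩⟩

/-- Translate of a tile by a vector. -/
def Tile.translate {d : ℕ} (t : Tile d) (x : Pt d) : Tile d :=
  ⟨(fun y => y + x) '' t.carrier, t.label⟩

/-- A tile proper: homeomorphic to the closed unit ball. -/
def Tile.IsTile {d : ℕ} (t : Tile d) : Prop :=
  Nonempty (t.carrier ≃ₜ (Metric.closedBall (0 : Pt d) 1))

/-- Support of a partial tiling: the union of its tiles. -/
def psupp {d : ℕ} (P : Set (Tile d)) : Set (Pt d) := ⋃ t ∈ P, t.carrier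

/-- `tilesAt P U` = the tiles of `P` meeting `U`, written `P(U)` in the paper. -/
def tilesAt {d : ℕ} (P : Set (Tile d)) (U : Set (Pt d)) : Set (Tile d) :=
  {t ∈ P | (t.carrier ∩ U).Nonempty}

/-- Translate of a collection of tiles. -/
def translateSet {d : ℕ} (P : Set (Tile d)) (x : Pt d) : Set (Tile d) :=
  (fun t => t.translate x) '' P

/-- A partial tiling: tiles with pairwise disjoint interiors. -/
def IsPartialTiling {d : ℕ} (P : Set (Tile d)) : Prop :=
  (∀ t ∈ P, t.IsTile) ∧
  ∀ t ∈ P, ∀ t' ∈ P, t ≠ t' → interior t.carrier ∩ interior t'.carrier = ∅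

/-- A patch: a finite partial tiling. -/
def IsPatch {d : ℕ} (P : Set (Tile d)) : Prop := IsPartialTiling P ∧ P.Finite

/-- A tiling of all of `ℝ^d`. -/
def IsTilingOfSpace {d : ℕ} (P : Set (Tile d)) : Prop :=
  IsPartialTiling P ∧ psupp P = univ

/-- A substitution tiling system `(𝒫, ω)` with inflation constant `λ > 1`. -/
structure SubstSystem (d : ℕ) where
  proto : Set (Tile d)
  proto_finite : proto.Finite
  proto_nonempty : proto.Nonempty
  proto_isTile : ∀ p ∈ proto, p.IsTile
  proto_zero_mem : ∀ p ∈ proto, (0 : Pt d) ∈ interior p.carrier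
  proto_no_translate : ∀ p ∈ proto, ∀ q ∈ proto, ∀ x : Pt d,
    q = p.translate x → p = q ∧ x = 0
  lam : ℝ
  one_lt_lam : 1 < lam
  sub : Tile d → Set (Tile d)
  sub_patch : ∀ p ∈ proto, IsPatch (sub p)
  sub_proto : ∀ p ∈ proto, ∀ t ∈ sub p, ∃ q ∈ proto, ∃ x : Pt d, t = q.translate x
  sub_supp : ∀ p ∈ proto, psupp (sub p) = lam • p.carrier
  sub_translate : ∀ (t : Tile d) (x : Pt d),
    sub (t.translate x) = (fun s => s.translate (lam • x)) '' sub t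

namespace SubstSystem

variable {d : ℕ} (S : SubstSystem d)

/-- Tile-wise application of the substitution to a collection of tiles. -/
def subSet (P : Set (Tile d)) : Set (Tile d) := ⋃ t ∈ P, S.sub t

/-- Iterated substitution `ω^n` on collections of tiles. -/
def subIter (n : ℕ) (P : Set (Tile d)) : Set (Tile d) := (S.subSet)^[n] P

/-- `ω^n(t)` for a single tile `t`. -/
def omegan (n : ℕ) (t : Tile d) : Set (Tile d) := S.subIter n {t}

/-- The continuous hull `Ω`. -/
def Omega : Set (Set (Tile d)) :=
  {T | IsTilingOfSpace T ∧ ∀ P : Set (Tile d), P ⊆ T → IsPatch P →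
    ∃ n : ℕ, ∃ p ∈ S.proto, ∃ x : Pt d, P ⊆ translateSet (S.omegan n p) x}

/-- `x` is the puncture of the tile `t`, i.e. `t = p + x` for a prototile `p`. -/
def IsPuncture (t : Tile d) (x : Pt d) : Prop :=
  ∃ p ∈ S.proto, t = p.translate x

open Classical in
/-- The puncture `x(t)` of a tile `t` (chosen; unique for translates of prototiles). -/
def punc (t : Tile d) : Pt d :=
  if h : ∃ x : Pt d, S.IsPuncture t x then h.choose else 0

/-- The punctured hull (transversal) `Ω_punc`. -/
def OmegaPunc : Set (Set (Tile d)) :=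
  {T ∈ S.Omega | ∃ t ∈ T, S.IsPuncture t 0}

end SubstSystem

/-- The tiling metric. -/
def tilingDist {d : ℕ} (T T' : Set (Tile d)) : ℝ :=
  sInf ({1} ∪ {ε : ℝ | 0 < ε ∧ ∃ x x' : Pt d, ‖x‖ < ε ∧ ‖x'‖ < ε ∧
    tilesAt (translateSet T (-x)) (ball (0 : Pt d) (1 / ε)) =
      tilesAt (translateSet T' (-x')) (ball (0 : Pt d) (1 / ε))})

namespace SubstSystem

variable {d : ℕ} (S : SubstSystem d)

/-- Density of a family of tilings in `Ω_punc` w.r.t. the tiling metric. -/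
def DenseInPunc (E : Set (Set (Tile d))) : Prop :=
  ∀ T ∈ S.OmegaPunc, ∀ ε : ℝ, 0 < ε → ∃ T' ∈ E, tilingDist T T' < ε

/-- Openness of a subset of `Ω_punc` w.r.t. the tiling metric (subspace topology). -/
def OpenInPunc (E : Set (Set (Tile d))) : Prop :=
  E ⊆ S.OmegaPunc ∧ ∀ T ∈ E, ∃ ε : ℝ, 0 < ε ∧
    ∀ T' ∈ S.OmegaPunc, tilingDist T T' < ε → T' ∈ E

/-- The translational equivalence relation `R_punc` on `Ω_punc`. -/
def Rpunc : Set (Set (Tile d) × Set (Tile d)) :=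
  {TT | TT.1 ∈ S.OmegaPunc ∧ TT.2 ∈ S.OmegaPunc ∧ ∃ x : Pt d, TT.2 = translateSet TT.1 x}

/-- `Punc(n, p)`: the punctures of the tiles of `ω^n(p)`. -/
def Punc (n : ℕ) (p : Tile d) : Set (Pt d) :=
  {x | ∃ t ∈ S.omegan n p, S.IsPuncture t x}

/-- `E^n_p(x, y)`. -/
def Eset (n : ℕ) (p : Tile d) (x y : Pt d) : Set (Set (Tile d) × Set (Tile d)) :=
  {TT | ∃ T ∈ S.OmegaPunc, p ∈ T ∧
    TT.1 = translateSet (S.subIter n T) (-x) ∧ TT.2 = translateSet (S.subIter n T) (-y)}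

/-- `R_n`. -/
def Rn (n : ℕ) : Set (Set (Tile d) × Set (Tile d)) :=
  ⋃ p ∈ S.proto, ⋃ x ∈ S.Punc n p, ⋃ y ∈ S.Punc n p, S.Eset n p x y

/-- `R_AF = ∪ₙ R_n`. -/
def RAF : Set (Set (Tile d) × Set (Tile d)) := ⋃ n : ℕ, S.Rn n

/-- `U(P, t)`. -/
def Uset (P : Set (Tile d)) (t : Tile d) : Set (Set (Tile d)) :=
  {T ∈ S.OmegaPunc | translateSet P (-(S.punc t)) ⊆ T}

/-- `V(P, t₁, t₂)`. -/
def Vset (P : Set (Tile d)) (t₁ t₂ : Tile d) : Set (Set (Tile d) × Set (Tile d)) :=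
  {TT | TT.1 ∈ S.Uset P t₁ ∧ TT.2 = translateSet TT.1 (S.punc t₁ - S.punc t₂)}

/-- (A1) primitivity. -/
def Primitive : Prop :=
  ∃ N : ℕ, ∀ p ∈ S.proto, ∀ q ∈ S.proto, ∃ x : Pt d, Tile.translate q x ∈ S.omegan N p

/-- (A2) finite local complexity. -/
def FLC : Prop :=
  ∀ R : ℝ, 0 < R → ∃ Ps : Set (Set (Tile d)), Ps.Finite ∧
    ∀ P : Set (Tile d), IsPatch P → Metric.diam (psupp P) < R →
      (∃ T ∈ S.Omega, P ⊆ T) → ∃ P₀ ∈ Ps, ∃ x : Pt d, P = translateSet P₀ x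

/-- (A3) `ω : Ω → Ω` is bijective. -/
def SubBijective : Prop := Set.BijOn S.subSet S.Omega S.Omega

/-- (A4) `ω` forces its border. -/
def ForcesBorder : Prop :=
  ∃ n : ℕ, ∀ p ∈ S.proto, ∀ T ∈ S.Omega, ∀ T' ∈ S.Omega, ∀ x x' : Pt d,
    translateSet (S.omegan n p) x ⊆ T → translateSet (S.omegan n p) x' ⊆ T' →
    translateSet (tilesAt T ((fun y => y + x) '' psupp (S.omegan n p))) (-x) =
      translateSet (tilesAt T' ((fun y => y + x') '' psupp (S.omegan n p))) (-x')

/-- Prototile boundaries have box-counting dimension strictly less than `d`. -/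
def SmallBoundary : Prop :=
  ∃ c : ℝ, c < d ∧ ∃ K₀ : ℝ, ∀ p ∈ S.proto, ∀ ε : ℝ, 0 < ε →
    ∃ centers : Finset (Pt d), (centers.card : ℝ) ≤ K₀ * ε ^ (-c) ∧
      frontier p.carrier ⊆ ⋃ z ∈ centers, ball z ε

end SubstSystem

/-- A symmetry group action for `(𝒫, ω)`: `G ≤ O(d, ℝ)` acting on tiles, preserving
the prototile set and commuting with the substitution. -/
structure SymmAction {d : ℕ} (S : SubstSystem d) (G : Subgroup (Pt d ≃ₗᵢ[ℝ] Pt d)) where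
  act : G → Tile d → Tile d
  act_carrier : ∀ (g : G) (t : Tile d),
    (act g t).carrier = (g : Pt d ≃ₗᵢ[ℝ] Pt d) '' t.carrier
  act_one : ∀ t : Tile d, act 1 t = t
  act_mul : ∀ (g h : G) (t : Tile d), act (g * h) t = act g (act h t)
  act_proto : ∀ (g : G), ∀ p ∈ S.proto, act g p ∈ S.proto
  act_translate : ∀ (g : G) (t : Tile d) (x : Pt d),
    act g (t.translate x) = (act g t).translate ((g : Pt d ≃ₗᵢ[ℝ] Pt d) x)
  act_sub : ∀ (g : G), ∀ p ∈ S.proto, S.sub (act g p) = act g '' S.sub p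

/-- Action of a group element on a (partial) tiling: `gT = {gt : t ∈ T}`. -/
def SymmAction.actSet {d : ℕ} {S : SubstSystem d} {G : Subgroup (Pt d ≃ₗᵢ[ℝ] Pt d)}
    (σ : SymmAction S G) (g : G) (T : Set (Tile d)) : Set (Tile d) := σ.act g '' T

/-- `G` acts freely on the prototile set. -/
def SymmAction.FreeOnProto {d : ℕ} {S : SubstSystem d} {G : Subgroup (Pt d ≃ₗᵢ[ℝ] Pt d)}
    (σ : SymmAction S G) : Prop := ∀ g : G, ∀ p ∈ S.proto, σ.act g p = p → g = 1

/-- Composition of relations. -/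
def relComp {α : Type*} (R₁ R₂ : Set (α × α)) : Set (α × α) :=
  {q | ∃ z : α, (q.1, z) ∈ R₁ ∧ (z, q.2) ∈ R₂}

/-- Transpose (inverse) of a relation. -/
def relTrans {α : Type*} (R : Set (α × α)) : Set (α × α) := {q | (q.2, q.1) ∈ R}

end
section Aux
open SubstSystem

variable {d : ℕ}

theorem Tile.translate_translate (t : Tile d) (a b : Pt d) :
    (t.translate a).translate b = t.translate (a + b) := by
  simp only [Tile.translate, Set.image_image]
  congr 1
  ext z
  constructor
  · rintro ⟨y, hy, rfl⟩; exact ⟨y, hy, by abel⟩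
  · rintro ⟨y, hy, rfl⟩; exact ⟨y, hy, by abel⟩

theorem Tile.translate_zero (t : Tile d) : t.translate 0 = t := by
  simp [Tile.translate]

theorem translateSet_translateSet (Q : Set (Tile d)) (a b : Pt d) :
    translateSet (translateSet Q a) b = translateSet Q (a + b) := by
  simp only [translateSet, Set.image_image, Tile.translate_translate]

theorem translateSet_zero (Q : Set (Tile d)) : translateSet Q 0 = Q := by
  simp [translateSet, Tile.translate_zero]

theorem mem_psupp {Q : Set (Tile d)} {z : Pt d} :
    z ∈ psupp Q ↔ ∃ t ∈ Q, z ∈ t.carrier := by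
  simp [psupp]

theorem Tile.nonempty_of_isTile {t : Tile d} (h : t.IsTile) : t.carrier.Nonempty := by
  obtain ⟨e⟩ := h
  have h0 : (0 : Pt d) ∈ Metric.closedBall (0 : Pt d) 1 := by simp
  exact ⟨(e.symm ⟨0, h0⟩ : t.carrier), (e.symm ⟨0, h0⟩).2⟩

theorem Tile.compact_of_isTile {t : Tile d} (h : t.IsTile) : IsCompact t.carrier := by
  obtain ⟨e⟩ := h
  have : CompactSpace (Metric.closedBall (0 : Pt d) 1) :=
    isCompact_iff_compactSpace.mp (isCompact_closedBall _ _)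
  have : CompactSpace t.carrier := e.symm.compactSpace
  exact isCompact_iff_compactSpace.mpr this

end Aux
section Aux2
open SubstSystem

variable {d : ℕ} {S : SubstSystem d}

theorem proto_translate_inj {q q' : Tile d} (hq : q ∈ S.proto) (hq' : q' ∈ S.proto)
    {x x' : Pt d} (h : q.translate x = q'.translate x') : q = q' ∧ x = x' := by
  have h2 : q' = q.translate (x - x') := by
    have : (q'.translate x').translate (-x') = q' := by
      rw [Tile.translate_translate, add_neg_cancel, Tile.translate_zero]
    rw [← this, ← h, Tile.translate_translate, sub_eq_add_neg]
  obtain ⟨h3, h4⟩ := S.proto_no_translate q hq q' hq' (x - x') h2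
  exact ⟨h3, by rwa [sub_eq_zero] at h4⟩

theorem punc_eq {q : Tile d} (hq : q ∈ S.proto) (x : Pt d) :
    S.punc (q.translate x) = x := by
  have hex : ∃ w, S.IsPuncture (q.translate x) w := ⟨x, q, hq, rfl⟩
  rw [SubstSystem.punc, dif_pos hex]
  obtain ⟨q', hq', heq⟩ := hex.choose_spec
  exact ((proto_translate_inj hq hq' heq).2).symm

/-- tiles of `ω^n(p)` are translates of prototiles -/
theorem omegan_proto {p : Tile d} (hp : p ∈ S.proto) (n : ℕ) :
    ∀ t ∈ S.omegan n p, ∃ q ∈ S.proto, ∃ x : Pt d, t = q.translate x := by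
  induction n with
  | zero =>
    intro t ht
    rw [SubstSystem.omegan, SubstSystem.subIter, Function.iterate_zero_apply] at ht
    exact ⟨p, hp, 0, by rw [Set.mem_singleton_iff] at ht; rw [ht, Tile.translate_zero]⟩
  | succ n ih =>
    intro t ht
    rw [SubstSystem.omegan, SubstSystem.subIter, Function.iterate_succ_apply'] at ht
    rw [SubstSystem.subSet, Set.mem_iUnion₂] at ht
    obtain ⟨u, hu, htu⟩ := ht
    obtain ⟨q, hq, y, rfl⟩ := ih u hu
    rw [S.sub_translate] at htu
    obtain ⟨v, hv, rfl⟩ := htu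
    obtain ⟨q', hq', y', rfl⟩ := S.sub_proto q hq v hv
    exact ⟨q', hq', y' + S.lam • y, by
      show (q'.translate y').translate (S.lam • y) = _
      rw [Tile.translate_translate]⟩

theorem singleton_patch {T : Set (Tile d)} (hT : IsPartialTiling T) {t : Tile d}
    (ht : t ∈ T) : IsPatch {t} := by
  refine ⟨⟨fun s hs => ?_, fun a ha b hb hab => ?_⟩, Set.finite_singleton t⟩
  · rw [Set.mem_singleton_iff] at hs; exact hs ▸ hT.1 t ht
  · rw [Set.mem_singleton_iff] at ha hb; exact absurd (ha.trans hb.symm) hab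

/-- every tile of a tiling in `Ω` is a translate of a prototile -/
theorem tile_mem_omega {T : Set (Tile d)} (hT : T ∈ S.Omega) {t : Tile d} (ht : t ∈ T) :
    ∃ q ∈ S.proto, ∃ x : Pt d, t = q.translate x := by
  obtain ⟨n, p, hp, x, hsub⟩ := hT.2 {t} (Set.singleton_subset_iff.mpr ht)
    (singleton_patch hT.1.1 ht)
  obtain ⟨s, hs, hst⟩ := hsub rfl
  obtain ⟨q, hq, y, rfl⟩ := omegan_proto hp n s hs
  exact ⟨q, hq, y + x, by
    rw [← hst]; show (q.translate y).translate x = _; rw [Tile.translate_translate]⟩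

theorem psupp_subSet (Q : Set (Tile d)) :
    psupp (S.subSet Q) = ⋃ t ∈ Q, psupp (S.sub t) := by
  ext z
  simp only [mem_psupp, SubstSystem.subSet, Set.mem_iUnion₂, Set.mem_iUnion]
  aesop

theorem psupp_translateSet (Q : Set (Tile d)) (a : Pt d) :
    psupp (translateSet Q a) = (fun z => z + a) '' psupp Q := by
  ext z
  simp only [mem_psupp, translateSet, Set.mem_image, Tile.translate]
  aesop

end Aux2
section Aux3
open SubstSystem Metric

variable {d : ℕ} {S : SubstSystem d}

theorem image_add_ball (x : Pt d) (ε : ℝ) :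
    (fun y => y + x) '' Metric.ball (0 : Pt d) ε = Metric.ball x ε := by
  ext z
  simp only [Set.mem_image, Metric.mem_ball, dist_eq_norm, sub_zero]
  constructor
  · rintro ⟨y, hy, rfl⟩; simpa using hy
  · intro hz; exact ⟨z - x, hz, by abel⟩

theorem interior_translate (A : Set (Pt d)) (x : Pt d) :
    interior ((fun y => y + x) '' A) = (fun y => y + x) '' interior A := by
  have h := (Homeomorph.addRight x).image_interior A
  simpa using h.symm

theorem closure_translate (A : Set (Pt d)) (x : Pt d) :
    closure ((fun y => y + x) '' A) = (fun y => y + x) '' closure A := by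
  have h := (Homeomorph.addRight x).image_closure A
  simpa using h.symm

theorem ball_subset_interior_translate {q : Tile d} {ε : ℝ}
    (hball : Metric.ball (0 : Pt d) ε ⊆ interior q.carrier) (x : Pt d) :
    Metric.ball x ε ⊆ interior ((q.translate x).carrier) := by
  rw [Tile.translate, interior_translate, ← image_add_ball x ε]
  exact Set.image_mono hball

theorem psupp_omegan {p : Tile d} (hp : p ∈ S.proto) (n : ℕ) :
    psupp (S.omegan n p) = (fun z => S.lam ^ n • z) '' p.carrier := by
  induction n with
  | zero =>
    rw [SubstSystem.omegan, SubstSystem.subIter, Function.iterate_zero_apply]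
    simp [psupp]
  | succ n ih =>
    rw [SubstSystem.omegan, SubstSystem.subIter, Function.iterate_succ_apply']
    rw [psupp_subSet]
    have hsub1 : ∀ t ∈ S.omegan n p, psupp (S.sub t) = (fun z => S.lam • z) '' t.carrier := by
      intro t ht
      obtain ⟨q, hq, x, rfl⟩ := omegan_proto hp n t ht
      rw [S.sub_translate]
      have himg : (fun s => s.translate (S.lam • x)) '' S.sub q
          = translateSet (S.sub q) (S.lam • x) := rfl
      rw [himg, psupp_translateSet, S.sub_supp q hq]
      rw [← Set.image_smul]
      show _ = (fun z => S.lam • z) '' ((fun y => y + x) '' q.carrier)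
      rw [Set.image_image, Set.image_image]
      congr 1
      ext y
      simp [smul_add]
    calc ⋃ t ∈ S.omegan n p, psupp (S.sub t)
        = ⋃ t ∈ S.omegan n p, (fun z => S.lam • z) '' t.carrier := by
          apply Set.iUnion₂_congr hsub1
      _ = (fun z => S.lam • z) '' psupp (S.omegan n p) := by
          rw [psupp]; rw [Set.image_iUnion₂]
      _ = (fun z => S.lam ^ (n+1) • z) '' p.carrier := by
          rw [ih, Set.image_image]
          congr 1
          ext y
          simp [smul_smul, pow_succ, mul_comm]

end Aux3
section Aux4
open SubstSystem Metric

variable {d : ℕ} {S : SubstSystem d}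

theorem carrier_subset_closure_interior {p : Tile d} (hp : p ∈ S.proto)
    {D : ℝ} (hD : ∀ q ∈ S.proto, q.carrier ⊆ Metric.closedBall (0 : Pt d) D) (hD0 : 0 ≤ D)
    {ε : ℝ} (hε : 0 < ε)
    (hball : ∀ q ∈ S.proto, Metric.ball (0 : Pt d) ε ⊆ interior q.carrier) :
    p.carrier ⊆ closure (interior p.carrier) := by
  intro y hy
  rw [Metric.mem_closure_iff]
  intro δ hδ
  have hlam1 : (1 : ℝ) < S.lam := S.one_lt_lam
  have hlam0 : (0 : ℝ) < S.lam := lt_trans one_pos hlam1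
  have hinvlt : S.lam⁻¹ < 1 := inv_lt_one_of_one_lt₀ hlam1
  have hinv0 : (0 : ℝ) < S.lam⁻¹ := inv_pos.mpr hlam0
  obtain ⟨n, hn⟩ := exists_pow_lt_of_lt_one (div_pos hδ (by linarith : (0:ℝ) < D + 1)) hinvlt
  have hnlt : S.lam⁻¹ ^ n * (D + 1) < δ := by
    rw [← lt_div_iff₀ (by linarith : (0:ℝ) < D + 1)]; exact hn
  have hpow0 : (0 : ℝ) < S.lam ^ n := pow_pos hlam0 n
  have hpowne : (S.lam ^ n : ℝ) ≠ 0 := ne_of_gt hpow0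
  -- find the tile containing `λ^n • y`
  have hmem : S.lam ^ n • y ∈ psupp (S.omegan n p) := by
    rw [psupp_omegan hp]; exact ⟨y, hy, rfl⟩
  obtain ⟨t, ht, hzt⟩ := mem_psupp.mp hmem
  obtain ⟨q, hq, x, rfl⟩ := omegan_proto hp n t ht
  obtain ⟨c, hc, hcx⟩ := hzt
  have hcD : ‖c‖ ≤ D := by
    have := hD q hq hc; rwa [Metric.mem_closedBall, dist_zero_right] at this
  set z := (S.lam ^ n)⁻¹ • x with hz
  refine ⟨z, ?_, ?_⟩
  · -- z ∈ interior p.carrier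
    have hU : ((S.lam ^ n)⁻¹ • Metric.ball x ε : Set (Pt d)) ⊆ p.carrier := by
      rintro w ⟨w', hw', rfl⟩
      have h1 : w' ∈ interior ((q.translate x).carrier) :=
        ball_subset_interior_translate (hball q hq) x hw'
      have h2 : w' ∈ psupp (S.omegan n p) :=
        mem_psupp.mpr ⟨q.translate x, ht, interior_subset h1⟩
      rw [psupp_omegan hp] at h2
      obtain ⟨u, hu, rfl⟩ := h2
      show (S.lam ^ n)⁻¹ • (S.lam ^ n • u) ∈ p.carrier
      rwa [inv_smul_smul₀ hpowne]
    have hUopen : IsOpen ((S.lam ^ n)⁻¹ • Metric.ball x ε : Set (Pt d)) :=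
      (isOpen_ball).smul₀ (inv_ne_zero hpowne)
    have hzU : z ∈ ((S.lam ^ n)⁻¹ • Metric.ball x ε : Set (Pt d)) :=
      ⟨x, Metric.mem_ball_self hε, rfl⟩
    exact interior_maximal hU hUopen hzU
  · -- dist y z < δ
    have hyz : y - z = (S.lam ^ n)⁻¹ • c := by
      have h1 : y = (S.lam ^ n)⁻¹ • (S.lam ^ n • y) := by
        rw [inv_smul_smul₀ hpowne]
      have hcx' : c + x = S.lam ^ n • y := hcx
      rw [h1, hz, ← smul_sub]
      congr 1
      rw [← hcx']; abel
    rw [dist_eq_norm, hyz, norm_smul]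
    have : ‖(S.lam ^ n)⁻¹‖ = S.lam⁻¹ ^ n := by
      rw [Real.norm_eq_abs, abs_of_pos (inv_pos.mpr hpow0), inv_pow]
    rw [this]
    calc S.lam⁻¹ ^ n * ‖c‖ ≤ S.lam⁻¹ ^ n * (D + 1) := by
          apply mul_le_mul_of_nonneg_left (by linarith) (le_of_lt (pow_pos hinv0 n))
      _ < δ := hnlt

end Aux4
section Aux5
open SubstSystem Metric

variable {d : ℕ} {S : SubstSystem d}

theorem tile_subset_closure_interior {q : Tile d} (x : Pt d)
    (h : q.carrier ⊆ closure (interior q.carrier)) :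
    (q.translate x).carrier ⊆ closure (interior ((q.translate x).carrier)) := by
  show (fun y => y + x) '' q.carrier ⊆ _
  rw [Tile.translate]
  intro w hw
  rw [interior_translate, closure_translate]
  obtain ⟨w', hw', rfl⟩ := hw
  exact ⟨w', h hw', rfl⟩

/-- two tiles of a partial tiling whose punctures are within `2ε` coincide -/
theorem tile_eq_of_punc_close {T : Set (Tile d)} (hT : IsPartialTiling T)
    {ε : ℝ} (hε : 0 < ε)
    (hball : ∀ q ∈ S.proto, Metric.ball (0 : Pt d) ε ⊆ interior q.carrier)
    {q q' : Tile d} (hq : q ∈ S.proto) (hq' : q' ∈ S.proto) {x x' : Pt d}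
    (ht : q.translate x ∈ T) (ht' : q'.translate x' ∈ T)
    (hdist : dist x x' < 2 * ε) : q.translate x = q'.translate x' := by
  by_contra hne
  have hdisj := hT.2 _ ht _ ht' hne
  set m : Pt d := x + (2⁻¹ : ℝ) • (x' - x) with hm
  have hmx : m - x = (2⁻¹ : ℝ) • (x' - x) := by rw [hm]; abel
  have hmx' : m - x' = -((2⁻¹ : ℝ) • (x' - x)) := by rw [hm]; module
  have hnorm : ‖(2⁻¹ : ℝ) • (x' - x)‖ < ε := by
    rw [norm_smul, Real.norm_eq_abs]
    have : |((2:ℝ))⁻¹| = 2⁻¹ := abs_of_pos (by norm_num)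
    rw [this]
    have h1 : ‖x' - x‖ = dist x x' := by rw [dist_eq_norm, norm_sub_rev]
    rw [h1]; linarith
  have hm1 : m ∈ Metric.ball x ε := by
    rw [Metric.mem_ball, dist_eq_norm, hmx]; exact hnorm
  have hm2 : m ∈ Metric.ball x' ε := by
    rw [Metric.mem_ball, dist_eq_norm, hmx', norm_neg]; exact hnorm
  have h1 := ball_subset_interior_translate (hball q hq) x hm1
  have h2 := ball_subset_interior_translate (hball q' hq') x' hm2
  have : m ∈ interior (q.translate x).carrier ∩ interior (q'.translate x').carrier :=
    ⟨h1, h2⟩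
  rw [hdisj] at this
  exact this

/-- local finiteness of tilings in `Ω` -/
theorem tilesAt_ball_finite {T : Set (Tile d)} (hT : T ∈ S.Omega)
    {D : ℝ} (hD : ∀ q ∈ S.proto, q.carrier ⊆ Metric.closedBall (0 : Pt d) D)
    {ε : ℝ} (hε : 0 < ε)
    (hball : ∀ q ∈ S.proto, Metric.ball (0 : Pt d) ε ⊆ interior q.carrier)
    (R : ℝ) : (tilesAt T (Metric.ball (0 : Pt d) R)).Finite := by
  obtain ⟨C, hCfin, hCcov⟩ := (totallyBounded_iff.mp
    (isCompact_closedBall (0 : Pt d) (R + D)).totallyBounded) ε hε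
  have hsub : tilesAt T (Metric.ball (0 : Pt d) R) ⊆
      ⋃ y ∈ C, {t ∈ tilesAt T (Metric.ball (0 : Pt d) R) | S.punc t ∈ Metric.ball y ε} := by
    intro t ht
    obtain ⟨htT, w, hwt, hwb⟩ := ht
    obtain ⟨q, hq, x, rfl⟩ := tile_mem_omega hT htT
    have hxball : x ∈ Metric.closedBall (0 : Pt d) (R + D) := by
      obtain ⟨c, hc, hcx⟩ := hwt
      have hcD : ‖c‖ ≤ D := by
        have := hD q hq hc; rwa [Metric.mem_closedBall, dist_zero_right] at this
      have hwR : ‖w‖ < R := by rwa [Metric.mem_ball, dist_zero_right] at hwb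
      have hxw : x = w - c := by rw [← hcx]; show x = c + x - c; abel
      rw [Metric.mem_closedBall, dist_zero_right, hxw]
      calc ‖w - c‖ ≤ ‖w‖ + ‖c‖ := norm_sub_le w c
        _ ≤ R + D := by linarith
    obtain ⟨y, hy, hxy⟩ := Set.mem_iUnion₂.mp (hCcov hxball)
    refine Set.mem_iUnion₂.mpr ⟨y, hy, ⟨⟨htT, w, hwt, hwb⟩, ?_⟩⟩
    rwa [punc_eq hq]
  refine Set.Finite.subset (Set.Finite.biUnion hCfin (fun y _ => ?_)) hsub
  apply Set.Subsingleton.finite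
  rintro t ⟨htA, hty⟩ t' ⟨ht'A, ht'y⟩
  obtain ⟨q, hq, x, rfl⟩ := tile_mem_omega hT htA.1
  obtain ⟨q', hq', x', rfl⟩ := tile_mem_omega hT ht'A.1
  rw [punc_eq hq] at hty
  rw [punc_eq hq'] at ht'y
  have hdist : dist x x' < 2 * ε := by
    calc dist x x' ≤ dist x y + dist y x' := dist_triangle x y x'
      _ < ε + ε := by
          rw [Metric.mem_ball] at hty ht'y
          rw [dist_comm y x'] at *
          linarith
      _ = 2 * ε := by ring
  exact tile_eq_of_punc_close hT.1.1 hε hball hq hq' htA.1 ht'A.1 hdist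

end Aux5
section Aux6
open SubstSystem Metric

variable {d : ℕ} {S : SubstSystem d}

theorem subset_psupp_tilesAt {T : Set (Tile d)} (hT : IsTilingOfSpace T)
    (U : Set (Pt d)) : U ⊆ psupp (tilesAt T U) := by
  intro y hy
  have : y ∈ psupp T := by rw [hT.2]; trivial
  obtain ⟨t, ht, hyt⟩ := mem_psupp.mp this
  exact mem_psupp.mpr ⟨t, ⟨ht, y, hyt, hy⟩, hyt⟩

theorem tilesAt_eq_of_subset {T T₀ : Set (Tile d)} (hT : T ∈ S.Omega)
    (hT₀ : T₀ ∈ S.Omega)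
    (hcl : ∀ q ∈ S.proto, q.carrier ⊆ closure (interior q.carrier))
    {r : ℝ} (hsub : tilesAt T₀ (Metric.ball (0 : Pt d) r) ⊆ T) :
    tilesAt T (Metric.ball (0 : Pt d) r) = tilesAt T₀ (Metric.ball (0 : Pt d) r) := by
  apply Set.Subset.antisymm
  · rintro t ⟨htT, y, hyt, hyb⟩
    obtain ⟨q, hq, x, rfl⟩ := tile_mem_omega hT htT
    have hclt := tile_subset_closure_interior x (hcl q hq)
    have hyc := hclt hyt
    obtain ⟨z, ⟨hzb, hzi⟩⟩ :=
      (_root_.mem_closure_iff.mp hyc) (Metric.ball (0 : Pt d) r) isOpen_ball hyb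
    have hzp := subset_psupp_tilesAt hT₀.1 (Metric.ball (0 : Pt d) r) hzb
    obtain ⟨s, hs, hzs⟩ := mem_psupp.mp hzp
    obtain ⟨q', hq', x', rfl⟩ := tile_mem_omega hT₀ hs.1
    have hcls := tile_subset_closure_interior x' (hcl q' hq')
    have hzc := hcls hzs
    obtain ⟨w, hwi, hws⟩ :=
      (_root_.mem_closure_iff.mp hzc) _ isOpen_interior hzi
    by_cases heq : q.translate x = q'.translate x'
    · rw [heq]; exact hs
    · exfalso
      have hdisj := hT.1.1.2 _ htT _ (hsub hs) heq
      have : w ∈ interior (q.translate x).carrier ∩ interior (q'.translate x').carrier :=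
        ⟨hwi, hws⟩
      rw [hdisj] at this
      exact this
  · rintro s hs
    exact ⟨hsub hs, hs.2⟩

end Aux6
/-- Lemma 4.1: For a patch `P` with `t₁, t₂ ∈ P`, `x(t₁) = 0` and
`supp(P) ⊆ B_r(0)`, the set `Y = {T(B_r(0)) : T ∈ U(P, t₁)}` is finite and
`V(P, t₁, t₂)` is the disjoint union of the `V(P', t₁, t₂)`, `P' ∈ Y`. -/
theorem stmt7 {d : ℕ} (hd : 1 ≤ d) (S : SubstSystem d) (hA2 : S.FLC)
    (P : Set (Tile d)) (hP : IsPatch P) (hPT : ∃ T ∈ S.Omega, P ⊆ T)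
    (t₁ : Tile d) (ht₁ : t₁ ∈ P) (t₂ : Tile d) (ht₂ : t₂ ∈ P)
    (hx₁ : S.punc t₁ = 0)
    (r : ℝ) (hr : 0 < r) (hsupp : psupp P ⊆ Metric.ball (0 : Pt d) r) :
    (((fun T => tilesAt T (Metric.ball (0 : Pt d) r)) '' S.Uset P t₁).Finite) ∧
    (S.Vset P t₁ t₂ =
      ⋃ P' ∈ (fun T => tilesAt T (Metric.ball (0 : Pt d) r)) '' S.Uset P t₁,
        S.Vset P' t₁ t₂) ∧
    ∀ P₁ ∈ (fun T => tilesAt T (Metric.ball (0 : Pt d) r)) '' S.Uset P t₁,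
      ∀ P₂ ∈ (fun T => tilesAt T (Metric.ball (0 : Pt d) r)) '' S.Uset P t₁,
        P₁ ≠ P₂ → S.Vset P₁ t₁ t₂ ∩ S.Vset P₂ t₁ t₂ = ∅ := by
  classical
  -- notation
  set B : Set (Pt d) := Metric.ball (0 : Pt d) r with hB
  -- uniform interior radius ε
  have hFne : S.proto_finite.toFinset.Nonempty := by
    obtain ⟨p0, hp0⟩ := S.proto_nonempty
    exact ⟨p0, S.proto_finite.mem_toFinset.mpr hp0⟩
  have hballex : ∀ q ∈ S.proto, ∃ e, 0 < e ∧
      Metric.ball (0 : Pt d) e ⊆ interior q.carrier := by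
    intro q hq
    obtain ⟨e, he, hsub⟩ := Metric.isOpen_iff.mp isOpen_interior 0 (S.proto_zero_mem q hq)
    exact ⟨e, he, hsub⟩
  choose! ef hef hefsub using hballex
  set ε : ℝ := S.proto_finite.toFinset.inf' hFne ef with hεdef
  have hε : 0 < ε := by
    rw [hεdef, Finset.lt_inf'_iff]
    intro q hq
    exact hef q (S.proto_finite.mem_toFinset.mp hq)
  have hballε : ∀ q ∈ S.proto, Metric.ball (0 : Pt d) ε ⊆ interior q.carrier := by
    intro q hq
    refine le_trans (Metric.ball_subset_ball ?_) (hefsub q hq)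
    exact Finset.inf'_le ef (S.proto_finite.mem_toFinset.mpr hq)
  -- uniform diameter bound D
  have hbdex : ∀ q ∈ S.proto, ∃ Dq, 0 ≤ Dq ∧
      q.carrier ⊆ Metric.closedBall (0 : Pt d) Dq := by
    intro q hq
    obtain ⟨Dq, hDq⟩ :=
      ((Tile.compact_of_isTile (S.proto_isTile q hq)).isBounded).subset_closedBall 0
    exact ⟨max Dq 0, le_max_right _ _,
      hDq.trans (Metric.closedBall_subset_closedBall (le_max_left _ _))⟩
  choose! Df hDf0 hDfsub using hbdex
  set D : ℝ := S.proto_finite.toFinset.sup' hFne Df with hDdef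
  have hD : ∀ q ∈ S.proto, q.carrier ⊆ Metric.closedBall (0 : Pt d) D := by
    intro q hq
    refine (hDfsub q hq).trans (Metric.closedBall_subset_closedBall ?_)
    exact Finset.le_sup' Df (S.proto_finite.mem_toFinset.mpr hq)
  have hD0 : 0 ≤ D := by
    obtain ⟨p0, hp0⟩ := S.proto_nonempty
    exact le_trans (hDf0 p0 hp0)
      (Finset.le_sup' Df (S.proto_finite.mem_toFinset.mpr hp0))
  -- closure-of-interior property
  have hcl : ∀ q ∈ S.proto, q.carrier ⊆ closure (interior q.carrier) :=
    fun q hq => carrier_subset_closure_interior hq hD hD0 hε hballε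
  -- translating by the puncture of t₁ is the identity
  have htrans0 : ∀ Q : Set (Tile d), translateSet Q (-(S.punc t₁)) = Q := by
    intro Q; rw [hx₁, neg_zero, translateSet_zero]
  -- t₁ is a prototile
  have ht₁proto : t₁ ∈ S.proto := by
    obtain ⟨Tp, hTpΩ, hPTp⟩ := hPT
    obtain ⟨qt, hqt, xt, ht₁eq⟩ := tile_mem_omega hTpΩ (hPTp ht₁)
    have hxt : S.punc t₁ = xt := by rw [ht₁eq, punc_eq hqt]
    have hxt0 : xt = 0 := by rw [← hxt, hx₁]
    rw [ht₁eq, hxt0, Tile.translate_zero]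
    exact hqt
  -- members of Uset contain P inside their ball-patch
  have hPsub : ∀ T ∈ S.Uset P t₁, P ⊆ tilesAt T B := by
    intro T hT t ht
    have hTsub : P ⊆ T := by
      have := hT.2; rwa [htrans0] at this
    obtain ⟨z, hz⟩ := Tile.nonempty_of_isTile (hP.1.1 t ht)
    have hzB : z ∈ B := hsupp (mem_psupp.mpr ⟨t, ht, hz⟩)
    exact ⟨hTsub ht, z, hz, hzB⟩
  have hUΩ : ∀ T ∈ S.Uset P t₁, T ∈ S.Omega := fun T hT => hT.1.1
  refine ⟨?_, ?_, ?_⟩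
  · -- FINITENESS
    set R : ℝ := 2 * (r + 2 * D) + 1 with hR
    have hR0 : 0 < R := by positivity
    obtain ⟨Ps, hPsfin, hPs⟩ := hA2 R hR0
    have hcover : (fun T => tilesAt T B) '' S.Uset P t₁ ⊆
        ⋃ P₀ ∈ Ps, {Q ∈ (fun T => tilesAt T B) '' S.Uset P t₁ |
          ∃ x : Pt d, Q = translateSet P₀ x} := by
      rintro Q ⟨T₀, hT₀, rfl⟩
      have hT₀Ω := hUΩ T₀ hT₀
      have hpatch : IsPatch (tilesAt T₀ B) := by
        refine ⟨⟨fun t ht => hT₀Ω.1.1.1 t ht.1,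
          fun t ht t' ht' hne => hT₀Ω.1.1.2 t ht.1 t' ht'.1 hne⟩, ?_⟩
        exact tilesAt_ball_finite hT₀Ω hD hε hballε r
      have hdiam : Metric.diam (psupp (tilesAt T₀ B)) < R := by
        have hsub2 : psupp (tilesAt T₀ B) ⊆ Metric.closedBall (0 : Pt d) (r + 2 * D) := by
          intro w hw
          obtain ⟨t, ht, hwt⟩ := mem_psupp.mp hw
          obtain ⟨q, hq, x, rfl⟩ := tile_mem_omega hT₀Ω ht.1
          obtain ⟨w', hw', rfl⟩ := hwt
          obtain ⟨y, hyt, hyB⟩ := ht.2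
          obtain ⟨c, hc, hcy⟩ := hyt
          have hcD : ‖c‖ ≤ D := by
            have := hD q hq hc; rwa [Metric.mem_closedBall, dist_zero_right] at this
          have hw'D : ‖w'‖ ≤ D := by
            have := hD q hq hw'; rwa [Metric.mem_closedBall, dist_zero_right] at this
          have hcy' : c + x = y := hcy
          have hyR : ‖c + x‖ < r := by
            rw [hcy']; rwa [hB, Metric.mem_ball, dist_zero_right] at hyB
          have hxR : ‖x‖ ≤ r + D := by
            calc ‖x‖ = ‖c + x - c‖ := by congr 1; abel
              _ ≤ ‖c + x‖ + ‖c‖ := norm_sub_le _ _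
              _ ≤ r + D := by linarith
          show w' + x ∈ Metric.closedBall (0 : Pt d) (r + 2 * D)
          rw [Metric.mem_closedBall, dist_zero_right]
          calc ‖w' + x‖ ≤ ‖w'‖ + ‖x‖ := norm_add_le _ _
            _ ≤ r + 2 * D := by linarith
        calc Metric.diam (psupp (tilesAt T₀ B))
            ≤ Metric.diam (Metric.closedBall (0 : Pt d) (r + 2 * D)) :=
              Metric.diam_mono hsub2 Metric.isBounded_closedBall
          _ ≤ 2 * (r + 2 * D) :=
              Metric.diam_closedBall (by linarith : (0:ℝ) ≤ r + 2 * D)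
          _ < R := by rw [hR]; linarith
      obtain ⟨P₀, hP₀, x, hx⟩ := hPs (tilesAt T₀ B) hpatch hdiam
        ⟨T₀, hT₀Ω, fun t ht => ht.1⟩
      exact Set.mem_iUnion₂.mpr ⟨P₀, hP₀, ⟨⟨T₀, hT₀, rfl⟩, x, hx⟩⟩
    refine Set.Finite.subset (Set.Finite.biUnion hPsfin (fun P₀ hP₀ => ?_)) hcover
    set YP := {Q ∈ (fun T => tilesAt T B) '' S.Uset P t₁ |
      ∃ x : Pt d, Q = translateSet P₀ x} with hYP
    rcases Set.eq_empty_or_nonempty YP with hYPe | ⟨Q₀, hQ₀⟩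
    · rw [hYPe]; exact Set.finite_empty
    obtain ⟨⟨T₀', hT₀'U, hQ₀eq⟩, x₀, hQ₀x⟩ := hQ₀
    have hT₀'Ω := hUΩ T₀' hT₀'U
    have hQ₀fin : Q₀.Finite := by
      rw [← hQ₀eq]; exact tilesAt_ball_finite hT₀'Ω hD hε hballε r
    have hsubim : YP ⊆ (fun v => translateSet Q₀ v) '' ((fun s => -(S.punc s)) '' Q₀) := by
      rintro Q ⟨⟨T', hT'U, hQeq⟩, x, hQx⟩
      have hQQ₀ : Q = translateSet Q₀ (x - x₀) := by
        have hxx : x₀ + (x - x₀) = x := by abel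
        rw [hQx, hQ₀x, translateSet_translateSet, hxx]
      have ht₁Q : t₁ ∈ Q := by rw [← hQeq]; exact hPsub T' hT'U ht₁
      rw [hQQ₀] at ht₁Q
      obtain ⟨s, hs, hst⟩ := ht₁Q
      have hsT₀' : s ∈ T₀' := by
        have hQ₀eq' : tilesAt T₀' B = Q₀ := hQ₀eq
        have : s ∈ tilesAt T₀' B := by rw [hQ₀eq']; exact hs
        exact this.1
      obtain ⟨q', hq', y, rfl⟩ := tile_mem_omega hT₀'Ω hsT₀'
      have hst' : q'.translate (y + (x - x₀)) = t₁.translate 0 := by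
        rw [Tile.translate_zero, ← Tile.translate_translate]
        exact hst
      obtain ⟨-, hyv⟩ := proto_translate_inj hq' ht₁proto hst'
      refine ⟨-(S.punc (q'.translate y)), ⟨q'.translate y, hs, rfl⟩, ?_⟩
      rw [punc_eq hq', hQQ₀, eq_neg_of_add_eq_zero_right hyv]
    exact Set.Finite.subset ((hQ₀fin.image _).image _) hsubim
  · -- UNION EQUALITY
    ext TT
    simp only [Set.mem_iUnion, Set.mem_image, exists_prop, exists_exists_and_eq_and]
    constructor
    · intro hTT
      refine ⟨TT.1, hTT.1, ⟨⟨hTT.1.1, ?_⟩, hTT.2⟩⟩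
      rw [htrans0]
      exact fun t ht => ht.1
    · rintro ⟨T₀, hT₀U, hTT⟩
      obtain ⟨⟨hOP, hsub'⟩, h2⟩ := hTT
      rw [htrans0] at hsub'
      refine ⟨⟨hOP, ?_⟩, h2⟩
      rw [htrans0]
      exact (hPsub T₀ hT₀U).trans hsub'
  · -- DISJOINTNESS
    rintro P₁ ⟨T₁', hT₁'U, rfl⟩ P₂ ⟨T₂', hT₂'U, rfl⟩ hne
    by_contra hne2
    obtain ⟨TT, hTT₁, hTT₂⟩ := Set.nonempty_iff_ne_empty.mpr hne2
    obtain ⟨⟨hOP1, hsub1⟩, -⟩ := hTT₁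
    obtain ⟨⟨-, hsub2⟩, -⟩ := hTT₂
    rw [htrans0] at hsub1 hsub2
    have hTTΩ : TT.1 ∈ S.Omega := hOP1.1
    have h1 := tilesAt_eq_of_subset hTTΩ (hUΩ T₁' hT₁'U) hcl hsub1
    have h2 := tilesAt_eq_of_subset hTTΩ (hUΩ T₂' hT₂'U) hcl hsub2
    apply hne
    show tilesAt T₁' B = tilesAt T₂' B
    rw [hB, ← h1, ← h2]
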